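/- arXiv:1103.1610 — 3 statements merged into one kernel-verified Lean document; each statement's English description precedes it below -/
import Mathlib

section
/- Every solvable group of finite abelian section rank has, for each natural number n, only finitely many subgroups of index n (i.e., belongs to the class ℱ𝒮). -/
/-!
Common definitions for formalizing "Cohomology and profinite topologies for solvable
groups of finite rank" (K. Lorensen).

Group cohomology is defined via inhomogeneous cochains.  The continuous cohomology of the
pro-`p` (resp. profinite) completion of `G` with coefficients in a finite discrete module is
the direct limit, over the normal subgroups `N` of finite `p`-power (resp. finite) index
acting trivially on the module, of the cohomology of the quotients `G ⧸ N`; accordingly, the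
statement that the completion map induces an isomorphism on cohomology is rendered as:
the canonical (inflation) maps from this directed system to `H^*(G, M)` are jointly
surjective, and any class of the system killed in `H^*(G, M)` is killed at a deeper level of
the system.
-/

open Function TensorProduct

universe u v

namespace GoodProfinite

variable {G H : Type u} {M : Type v}

/-- The group structure (under composition) on additive automorphisms, as in the older Mathlib. -/
instance addAutGroup (A : Type*) [Add A] : Group (AddAut A) where
  mul g h := AddEquiv.trans h g
  one := AddEquiv.refl _
  inv := AddEquiv.symm
  mul_assoc _ _ _ := rfl
  one_mul _ := rfl
  mul_one _ := rfl
  inv_mul_cancel := AddEquiv.self_trans_symm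

/-- The differential on inhomogeneous cochains of a group `G` with coefficients in a
`G`-module `M` (the action given by `ρ : G →* AddAut M`). -/
def cochainD [Group G] [AddCommGroup M] (ρ : G →* AddAut M) (n : ℕ) :
    ((Fin n → G) → M) →+ ((Fin (n + 1) → G) → M) :=
  AddMonoidHom.mk'
    (fun f g =>
      ρ (g 0) (f fun i => g i.succ) +
        ∑ j : Fin (n + 1), (-1 : ℤ) ^ ((j : ℕ) + 1) • f (Fin.contractNth j (· * ·) g))
    (by
      intro a b
      funext g
      simp only [Pi.add_apply, map_add, smul_add, Finset.sum_add_distrib]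
      abel)

/-- The `n`-cocycles. -/
def cocycleGroup [Group G] [AddCommGroup M] (ρ : G →* AddAut M) (n : ℕ) :
    AddSubgroup ((Fin n → G) → M) :=
  (cochainD ρ n).ker

/-- The `n`-coboundaries. -/
def coboundaryGroup [Group G] [AddCommGroup M] (ρ : G →* AddAut M) :
    (n : ℕ) → AddSubgroup ((Fin n → G) → M)
  | 0 => ⊥
  | n + 1 => (cochainD ρ n).range

/-- The `n`-th group cohomology of `G` with coefficients in the `G`-module `M`. -/
def groupCoh [Group G] [AddCommGroup M] (ρ : G →* AddAut M) (n : ℕ) : Type (max u v) :=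
  cocycleGroup ρ n ⧸ (coboundaryGroup ρ n).addSubgroupOf (cocycleGroup ρ n)

instance [Group G] [AddCommGroup M] (ρ : G →* AddAut M) (n : ℕ) :
    AddCommGroup (groupCoh ρ n) :=
  inferInstanceAs (AddCommGroup (_ ⧸ _))

/-- Precomposition of cochains with a group homomorphism. -/
def precompCochain [Group G] [Group H] [AddCommGroup M] (f : G →* H) (n : ℕ) :
    ((Fin n → H) → M) →+ ((Fin n → G) → M) :=
  AddMonoidHom.mk' (fun c g => c fun i => f (g i)) (fun _ _ => rfl)

lemma comp_contractNth [Group G] [Group H] (f : G →* H) {n : ℕ} (j : Fin (n + 1))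
    (g : Fin (n + 1) → G) :
    (fun k => f (Fin.contractNth j (· * ·) g k)) =
      Fin.contractNth j (· * ·) fun i => f (g i) := by
  funext k
  unfold Fin.contractNth
  split_ifs <;> simp [map_mul]

lemma cochainD_precomp [Group G] [Group H] [AddCommGroup M] (f : G →* H)
    (ρ : H →* AddAut M) (ρ' : G →* AddAut M) (hcomp : ∀ g, ρ' g = ρ (f g)) (n : ℕ)
    (c : (Fin n → H) → M) :
    cochainD ρ' n (precompCochain f n c) = precompCochain f (n + 1) (cochainD ρ n c) := by
  funext g
  show ρ' (g 0) (c fun i => f (g i.succ)) +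
      ∑ j : Fin (n + 1), (-1 : ℤ) ^ ((j : ℕ) + 1) •
        c (fun i => f (Fin.contractNth j (· * ·) g i)) =
    ρ (f (g 0)) (c fun i => f (g i.succ)) +
      ∑ j : Fin (n + 1), (-1 : ℤ) ^ ((j : ℕ) + 1) •
        c (Fin.contractNth j (· * ·) fun i => f (g i))
  rw [hcomp]
  congr 1
  refine Finset.sum_congr rfl fun j _ => ?_
  rw [comp_contractNth]

/-- The map on cocycles induced by a group homomorphism with compatible actions. -/
def cocycleMap [Group G] [Group H] [AddCommGroup M] (f : G →* H) (ρ : H →* AddAut M)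
    (ρ' : G →* AddAut M) (hcomp : ∀ g, ρ' g = ρ (f g)) (n : ℕ) :
    cocycleGroup ρ n →+ cocycleGroup ρ' n :=
  AddMonoidHom.codRestrict ((precompCochain f n).comp (cocycleGroup ρ n).subtype) _
    (fun x => by
      have hx : cochainD ρ n x.1 = 0 := x.2
      show precompCochain f n x.1 ∈ (cochainD ρ' n).ker
      rw [AddMonoidHom.mem_ker, cochainD_precomp f ρ ρ' hcomp, hx, map_zero])

/-- The map `H^n(H, M) → H^n(G, M)` on group cohomology induced by a group homomorphism
`f : G →* H` and compatible actions (`ρ' = ρ ∘ f`); e.g. inflation maps. -/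
def cohMap [Group G] [Group H] [AddCommGroup M] (f : G →* H) (ρ : H →* AddAut M)
    (ρ' : G →* AddAut M) (hcomp : ∀ g, ρ' g = ρ (f g)) (n : ℕ) :
    groupCoh ρ n →+ groupCoh ρ' n :=
  QuotientAddGroup.map _ _ (cocycleMap f ρ ρ' hcomp n)
    (by
      intro x hx
      rw [AddSubgroup.mem_addSubgroupOf] at hx
      rw [AddSubgroup.mem_comap, AddSubgroup.mem_addSubgroupOf]
      match n, x, hx with
      | 0, x, hx =>
          have : x.1 = 0 := hx
          show (precompCochain f 0) x.1 ∈ (⊥ : AddSubgroup _)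
          rw [this, map_zero]
          exact AddSubgroup.mem_bot.mpr rfl
      | (m + 1), x, hx =>
          obtain ⟨b, hb⟩ := hx
          show (precompCochain f (m + 1)) x.1 ∈ (cochainD ρ' m).range
          exact ⟨precompCochain f m b, by rw [cochainD_precomp f ρ ρ' hcomp, hb]⟩)

/-- The action of `G ⧸ N` on `M` induced by an action of `G` on which `N` acts trivially. -/
def quotAut [Group G] [AddCommGroup M] (ρ : G →* AddAut M) (N : Subgroup G) [N.Normal]
    (h : ∀ x ∈ N, ρ x = 1) : G ⧸ N →* AddAut M :=
  QuotientGroup.lift N ρ h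

/-- The natural projection `G ⧸ N' →* G ⧸ N` when `N' ≤ N`. -/
def quotMapHom [Group G] (N N' : Subgroup G) [N.Normal] [N'.Normal] (hle : N' ≤ N) :
    G ⧸ N' →* G ⧸ N :=
  QuotientGroup.map N' N (MonoidHom.id G) fun _ hx => hle hx

lemma quotAut_comp_quotMap [Group G] [AddCommGroup M] (ρ : G →* AddAut M)
    (N N' : Subgroup G) [N.Normal] [N'.Normal] (hle : N' ≤ N) (h : ∀ x ∈ N, ρ x = 1) :
    ∀ x : G ⧸ N', quotAut ρ N' (fun g hg => h g (hle hg)) x =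
      quotAut ρ N h (quotMapHom N N' hle x) := fun x =>
  QuotientGroup.induction_on x fun _ => rfl

/-- The canonical map from the continuous cohomology of the pro-`p` completion of `G`
(the direct limit over normal subgroups of finite `p`-power index acting trivially on `M`
of the cohomology of the corresponding quotients) to `H^*(G, M)` is an isomorphism in
every degree. -/
def ProPCompletionCohIso (p : ℕ) (G : Type u) [Group G] (M : Type v) [AddCommGroup M]
    (ρ : G →* AddAut M) : Prop :=
  ∀ n : ℕ,
    (∀ x : groupCoh ρ n,
      ∃ (N : Subgroup G) (hN : N.Normal),
        haveI := hN
        ∃ (_ : ∃ k, N.index = p ^ k) (h1 : ∀ y ∈ N, ρ y = 1)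
          (z : groupCoh (quotAut ρ N h1) n),
          cohMap (QuotientGroup.mk' N) (quotAut ρ N h1) ρ (fun _ => rfl) n z = x) ∧
    (∀ (N : Subgroup G) (hN : N.Normal),
      haveI := hN
      ∀ (_ : ∃ k, N.index = p ^ k) (h1 : ∀ y ∈ N, ρ y = 1)
        (z : groupCoh (quotAut ρ N h1) n),
        cohMap (QuotientGroup.mk' N) (quotAut ρ N h1) ρ (fun _ => rfl) n z = 0 →
        ∃ (N' : Subgroup G) (hN' : N'.Normal),
          haveI := hN'
          ∃ (_ : ∃ k, N'.index = p ^ k) (hle : N' ≤ N),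
            cohMap (quotMapHom N N' hle) (quotAut ρ N h1)
              (quotAut ρ N' fun g hg => h1 g (hle hg))
              (quotAut_comp_quotMap ρ N N' hle h1) n z = 0)

/-- The analogue of `ProPCompletionCohIso` for the full profinite completion: the canonical
map from the continuous cohomology of the profinite completion of `G` to `H^*(G, M)` is an
isomorphism in every degree. -/
def ProfiniteCompletionCohIso (G : Type u) [Group G] (M : Type v) [AddCommGroup M]
    (ρ : G →* AddAut M) : Prop :=
  ∀ n : ℕ,
    (∀ x : groupCoh ρ n,
      ∃ (N : Subgroup G) (hN : N.Normal),
        haveI := hN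
        ∃ (_ : N.FiniteIndex) (h1 : ∀ y ∈ N, ρ y = 1)
          (z : groupCoh (quotAut ρ N h1) n),
          cohMap (QuotientGroup.mk' N) (quotAut ρ N h1) ρ (fun _ => rfl) n z = x) ∧
    (∀ (N : Subgroup G) (hN : N.Normal),
      haveI := hN
      ∀ (_ : N.FiniteIndex) (h1 : ∀ y ∈ N, ρ y = 1)
        (z : groupCoh (quotAut ρ N h1) n),
        cohMap (QuotientGroup.mk' N) (quotAut ρ N h1) ρ (fun _ => rfl) n z = 0 →
        ∃ (N' : Subgroup G) (hN' : N'.Normal),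
          haveI := hN'
          ∃ (_ : N'.FiniteIndex) (hle : N' ≤ N),
            cohMap (quotMapHom N N' hle) (quotAut ρ N h1)
              (quotAut ρ N' fun g hg => h1 g (hle hg))
              (quotAut_comp_quotMap ρ N N' hle h1) n z = 0)

/-- The class `𝒢(p)`: the pro-`p` completion map `G → Ĝ_p` induces an isomorphism
`H^*(Ĝ_p, M) → H^*(G, M)` for every discrete `Ĝ_p`-module `M` of finite `p`-power order,
i.e. for every `G`-module `M` of finite `p`-power order whose action factors through a
quotient of finite `p`-power index. -/
def InGp (p : ℕ) (G : Type u) [Group G] : Prop :=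
  ∀ (M : Type u) [AddCommGroup M] (ρ : G →* AddAut M),
    (∃ k, Nat.card M = p ^ k) →
    (∃ N : Subgroup G, N.Normal ∧ (∃ k, N.index = p ^ k) ∧ ∀ y ∈ N, ρ y = 1) →
    ProPCompletionCohIso p G M ρ

/-- The class `𝒢*(p)`: the profinite completion map `G → Ĝ` induces an isomorphism
`H^*(Ĝ, M) → H^*(G, M)` for every discrete `Ĝ`-module `M` of finite `p`-power order,
i.e. for every `G`-module `M` of finite `p`-power order whose action factors through a
quotient of finite index. -/
def InGpStar (p : ℕ) (G : Type u) [Group G] : Prop :=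
  ∀ (M : Type u) [AddCommGroup M] (ρ : G →* AddAut M),
    (∃ k, Nat.card M = p ^ k) →
    (∃ N : Subgroup G, N.Normal ∧ N.FiniteIndex ∧ ∀ y ∈ N, ρ y = 1) →
    ProfiniteCompletionCohIso G M ρ

/-- The class `ℱ𝒮`: groups having only finitely many subgroups of each finite index. -/
def InFS (G : Type u) [Group G] : Prop :=
  ∀ n : ℕ, n ≠ 0 → {H : Subgroup G | H.index = n}.Finite

/-- The class `ℱℋ`: groups `G` such that `H^n(G, M)` is finite for every finite
`G`-module `M` and every `n ≥ 0`. -/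
def InFH (G : Type u) [Group G] : Prop :=
  ∀ (M : Type u) [AddCommGroup M] [Finite M] (ρ : G →* AddAut M) (n : ℕ),
    Finite (groupCoh ρ n)

/-- An abelian group has finite torsion-free rank iff `ℚ ⊗ A` is finite dimensional. -/
def HasFiniteTorsionFreeRank (A : Type v) [CommGroup A] : Prop :=
  Module.Finite ℚ (ℚ ⊗[ℤ] (Additive A))

/-- An abelian group has finite `p`-rank (its `p`-torsion subgroup is a direct sum of
finitely many cyclic and quasicyclic groups) iff its `p`-socle is finite. -/
def HasFinitePRank (p : ℕ) (A : Type v) [CommGroup A] : Prop :=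
  {a : A | a ^ p = 1}.Finite

/-- `G` has finite abelian section rank: every abelian section of `G` has finite
torsion-free rank and finite `p`-rank for every prime `p`. -/
def IsFAR (G : Type u) [Group G] : Prop :=
  ∀ (H : Subgroup G) (A : Type u) [CommGroup A] (φ : H →* A), Surjective φ →
    HasFiniteTorsionFreeRank A ∧ ∀ p : ℕ, p.Prime → HasFinitePRank p A

/-- The Prüfer `p`-group `C_{p^∞}`: the subgroup of `p`-power order elements of `ℚ/ℤ`. -/
def pruferSubgroup (p : ℕ) : AddSubgroup (AddCircle (1 : ℚ)) where
  carrier := {x | ∃ n : ℕ, p ^ n • x = 0}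
  zero_mem' := ⟨0, smul_zero _⟩
  add_mem' := by
    rintro a b ⟨m, hm⟩ ⟨n, hn⟩
    refine ⟨m + n, ?_⟩
    have ha : p ^ (m + n) • a = 0 := by rw [pow_add, mul_comm, mul_smul, hm, smul_zero]
    have hb : p ^ (m + n) • b = 0 := by rw [pow_add, mul_smul, hn, smul_zero]
    rw [smul_add, ha, hb, add_zero]
  neg_mem' := by
    rintro a ⟨m, hm⟩
    exact ⟨m, by rw [smul_neg, hm, neg_zero]⟩

/-- `G` has a subgroup isomorphic to the Prüfer `p`-group `C_{p^∞}`. -/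
def HasPruferSubgroup (p : ℕ) (G : Type u) [Group G] : Prop :=
  ∃ H : Subgroup G, Nonempty (H ≃* Multiplicative (pruferSubgroup p))

/-- `G` has a section (quotient of a subgroup) isomorphic to the Prüfer `p`-group, i.e.
`p ∈ spec G`. -/
def HasPruferSection (p : ℕ) (G : Type u) [Group G] : Prop :=
  ∃ (H : Subgroup G) (φ : H →* Multiplicative (pruferSubgroup p)), Surjective φ

/-- `H ≤_t G`: `H` is topologically embedded in `G`, i.e. the profinite topology of `G`
induces the full profinite topology on `H`. -/
def TopEmbedded {G : Type u} [Group G] (H : Subgroup G) : Prop :=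
  ∀ K : Subgroup H, K.Normal → K.FiniteIndex →
    ∃ L : Subgroup G, L.Normal ∧ L.FiniteIndex ∧ L.subgroupOf H ≤ K

/-- `H ≤_{t(p)} G`: `H` is topologically `p`-embedded in `G`, i.e. the pro-`p` topology of
`G` induces the full pro-`p` topology on `H`. -/
def TopPEmbedded (p : ℕ) {G : Type u} [Group G] (H : Subgroup G) : Prop :=
  ∀ K : Subgroup H, K.Normal → (∃ k, K.index = p ^ k) →
    ∃ L : Subgroup G, L.Normal ∧ (∃ k, L.index = p ^ k) ∧ L.subgroupOf H ≤ K

/-- The pro-`p` topology on `G` is homogeneous: every subgroup of `G` is topologically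
`p`-embedded in `G`. -/
def PHomogeneous (p : ℕ) (G : Type u) [Group G] : Prop :=
  ∀ H : Subgroup G, TopPEmbedded p H

/-- The `p`-residual of `G`: the kernel of the pro-`p` completion map, i.e. the
intersection of all normal subgroups of finite `p`-power index. -/
def pResidual (p : ℕ) (G : Type u) [Group G] : Subgroup G :=
  ⨅ (N : Subgroup G) (_ : N.Normal) (_ : ∃ k, N.index = p ^ k), N

/-- A `p'`-group: every element has finite order coprime to `p`. -/
def IsPPrimeGroup (p : ℕ) (G : Type u) [Group G] : Prop :=
  ∀ g : G, IsOfFinOrder g ∧ Nat.Coprime (orderOf g) p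

/-- The profinite topology on `G`, with the cosets of the normal subgroups of finite index
as basic open sets. -/
def profiniteTopology (G : Type u) [Group G] : TopologicalSpace G :=
  ⨅ (N : Subgroup G) (_ : N.Normal) (_ : N.FiniteIndex),
    TopologicalSpace.induced (QuotientGroup.mk (s := N)) ⊥

lemma normal_of_le_center {G : Type u} [Group G] {A : Subgroup G}
    (hA : A ≤ Subgroup.center G) : A.Normal :=
  ⟨fun a ha g => by
    have hc := (Subgroup.mem_center_iff.mp (hA ha)) g
    have : g * a * g⁻¹ = a := by rw [hc]; group
    rwa [this]⟩

section FSAux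

variable {G : Type u} [Group G]

open scoped commutatorElement

/-- The subgroup generated by commutators and `m`-th powers of elements of `X`. -/
private def fsV (m : ℕ) (X : Subgroup G) : Subgroup G :=
  Subgroup.closure {g | ∃ a ∈ X, ∃ b ∈ X, g = ⁅a, b⁆ ∨ g = a ^ m}

private lemma mem_fsV_of_commutator (m : ℕ) {X : Subgroup G} {a b : G}
    (ha : a ∈ X) (hb : b ∈ X) : ⁅a, b⁆ ∈ fsV m X :=
  Subgroup.subset_closure ⟨a, ha, b, hb, Or.inl rfl⟩

private lemma mem_fsV_of_pow (m : ℕ) {X : Subgroup G} {a : G} (ha : a ∈ X) :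
    a ^ m ∈ fsV m X :=
  Subgroup.subset_closure ⟨a, ha, a, ha, Or.inr rfl⟩

private lemma fsV_le (m : ℕ) (X : Subgroup G) : fsV m X ≤ X := by
  refine (Subgroup.closure_le X).2 ?_
  rintro g ⟨a, ha, b, hb, rfl | rfl⟩
  · rw [SetLike.mem_coe, commutatorElement_def]
    exact X.mul_mem (X.mul_mem (X.mul_mem ha hb) (X.inv_mem ha)) (X.inv_mem hb)
  · exact X.pow_mem ha m

private lemma map_fsV {H : Type v} [Group H] (f : G →* H) (m : ℕ) (X : Subgroup G) :
    (fsV m X).map f = fsV m (X.map f) := by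
  unfold fsV
  rw [MonoidHom.map_closure]
  congr 1
  ext g
  constructor
  · rintro ⟨x, ⟨a, ha, b, hb, rfl | rfl⟩, rfl⟩
    · exact ⟨f a, ⟨a, ha, rfl⟩, f b, ⟨b, hb, rfl⟩, Or.inl (map_commutatorElement f a b)⟩
    · exact ⟨f a, ⟨a, ha, rfl⟩, f a, ⟨a, ha, rfl⟩, Or.inr (map_pow f a m)⟩
  · rintro ⟨x, ⟨a, ha, rfl⟩, y, ⟨b, hb, rfl⟩, rfl | rfl⟩
    · exact ⟨⁅a, b⁆, ⟨a, ha, b, hb, Or.inl rfl⟩, map_commutatorElement f a b⟩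
    · exact ⟨a ^ m, ⟨a, ha, a, ha, Or.inr rfl⟩, map_pow f a m⟩

private lemma map_conj_self (X : Subgroup G) (hX : X.Normal) (g : G) :
    X.map (MulAut.conj g).toMonoidHom = X := by
  ext y
  simp only [Subgroup.mem_map, MulEquiv.coe_toMonoidHom, MulAut.conj_apply]
  constructor
  · rintro ⟨x, hx, rfl⟩
    exact hX.conj_mem x hx g
  · intro hy
    refine ⟨g⁻¹ * y * g, ?_, by group⟩
    have := hX.conj_mem y hy g⁻¹
    rwa [inv_inv] at this

private lemma fsV_normal (m : ℕ) {X : Subgroup G} (hX : X.Normal) : (fsV m X).Normal := by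
  constructor
  intro x hx g
  have h1 : (MulAut.conj g).toMonoidHom x ∈ (fsV m X).map (MulAut.conj g).toMonoidHom :=
    Subgroup.mem_map_of_mem _ hx
  rw [map_fsV, map_conj_self X hX g] at h1
  simpa using h1

/-- The descending series `W 0 = G`, `W (k+1) = [W k, W k] (W k)^m`. -/
private def fsW (m : ℕ) : ℕ → Subgroup G
  | 0 => ⊤
  | k + 1 => fsV m (fsW m k)

private lemma fsW_normal (m k : ℕ) : (fsW m k : Subgroup G).Normal := by
  induction k with
  | zero =>
    rw [show (fsW m 0 : Subgroup G) = ⊤ from rfl]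
    infer_instance
  | succ k ih => exact fsV_normal m ih

private lemma commutator_self_le (X : Subgroup G) : ⁅X, X⁆ ≤ X :=
  Subgroup.commutator_le.mpr fun g₁ h₁ g₂ h₂ => by
    rw [commutatorElement_def]
    exact X.mul_mem (X.mul_mem (X.mul_mem h₁ h₂) (X.inv_mem h₁)) (X.inv_mem h₂)

private lemma eq_bot_of_le_commutator {Q : Type v} [Group Q] [Group.IsSolvable Q]
    (X : Subgroup Q) (h : X ≤ ⁅X, X⁆) : X = ⊥ := by
  have hds : ∀ k, X ≤ derivedSeries Q k := by
    intro k
    induction k with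
    | zero => exact le_top
    | succ k ihk =>
      exact h.trans (le_of_le_of_eq (Subgroup.commutator_mono ihk ihk)
        (derivedSeries_succ Q k).symm)
  obtain ⟨k, hk⟩ := Group.IsSolvable.solvable (G := Q)
  exact le_bot_iff.mp (hk ▸ hds k)

/-- An abelian group of finite exponent with finite `p`-socle for every prime is finite. -/
private lemma fsFinAb : ∀ m : ℕ, m ≠ 0 → ∀ (A : Type v) [CommGroup A],
    (∀ a : A, a ^ m = 1) → (∀ p : ℕ, p.Prime → {a : A | a ^ p = 1}.Finite) → Finite A := by
  intro m
  induction m using Nat.strong_induction_on with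
  | _ m ih =>
    intro hm A _ hexp hsoc
    rcases eq_or_ne m 1 with rfl | hm1
    · have : Subsingleton A := ⟨fun a b => by rw [← pow_one a, hexp a, ← pow_one b, hexp b]⟩
      exact Finite.of_subsingleton
    have hp : m.minFac.Prime := Nat.minFac_prime hm1
    set p := m.minFac with hpdef
    set φ : A →* A := powMonoidHom p with hφ
    have hd : p ∣ m := Nat.minFac_dvd m
    have hq : m / p ≠ 0 := fun h => hm (by rw [← Nat.div_mul_cancel hd, h, zero_mul])
    haveI hker : Finite φ.ker := by
      have h1 := (hsoc p hp).to_subtype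
      exact Finite.of_injective
        (fun x : φ.ker => (⟨x.1, by exact MonoidHom.mem_ker.mp x.2⟩ :
          {a : A | a ^ p = 1}))
        (fun x y h => Subtype.ext (congrArg Subtype.val h))
    have hrexp : ∀ b : φ.range, b ^ (m / p) = 1 := by
      rintro ⟨b, a, rfl⟩
      have h2 : (φ a) ^ (m / p) = 1 := by
        show (a ^ p) ^ (m / p) = 1
        rw [← pow_mul, Nat.mul_div_cancel' hd, hexp]
      exact Subtype.ext (by simpa using h2)
    have hrsoc : ∀ q : ℕ, q.Prime → {b : φ.range | b ^ q = 1}.Finite := by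
      intro q hq'
      have h1 : {b : φ.range | b ^ q = 1} =
          (Subtype.val : φ.range → A) ⁻¹' {a : A | a ^ q = 1} := by
        ext b
        simp [Set.mem_preimage, ← Subtype.coe_inj]
      rw [h1]
      exact Set.Finite.preimage Subtype.val_injective.injOn (hsoc q hq')
    haveI hrange : Finite φ.range :=
      ih (m / p) (Nat.div_lt_self (Nat.pos_of_ne_zero hm) hp.one_lt) hq φ.range hrexp hrsoc
    haveI : Finite (A ⧸ φ.ker) :=
      Finite.of_equiv _ (QuotientGroup.quotientKerEquivRange φ).toEquiv.symm
    exact Finite.of_equiv ((A ⧸ φ.ker) × φ.ker) (Subgroup.groupEquivQuotientProdSubgroup (s := φ.ker)).symm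

private lemma fsW_index_ne_zero (hFAR : IsFAR G) (m : ℕ) (hm : m ≠ 0) :
    ∀ k, (fsW m k : Subgroup G).index ≠ 0 := by
  intro k
  induction k with
  | zero => simp [fsW, Subgroup.index_top]
  | succ k ih =>
    set X : Subgroup G := fsW m k with hX
    have hle : (fsW m (k + 1) : Subgroup G) ≤ X := fsV_le m X
    haveI hnorm : (fsW m (k + 1) : Subgroup G).Normal := fsW_normal m (k + 1)
    set N : Subgroup X := (fsW m (k + 1)).subgroupOf X with hN
    have hcomm : ∀ x y : X ⧸ N, x * y = y * x := by
      intro x y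
      refine QuotientGroup.induction_on x fun a => QuotientGroup.induction_on y fun b => ?_
      rw [← QuotientGroup.mk_mul, ← QuotientGroup.mk_mul,
        QuotientGroup.eq]
      have h1 : ((a * b)⁻¹ * (b * a) : X) = ⁅b⁻¹, a⁻¹⁆ := by
        rw [commutatorElement_def]
        group
      rw [h1, Subgroup.mem_subgroupOf]
      have h2 : ((⁅b⁻¹, a⁻¹⁆ : X) : G) = ⁅(b : G)⁻¹, (a : G)⁻¹⁆ := by
        simp [commutatorElement_def]
      rw [h2]
      exact mem_fsV_of_commutator m (X.inv_mem b.2) (X.inv_mem a.2)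
    have hexp : ∀ q : X ⧸ N, q ^ m = 1 := by
      intro q
      refine QuotientGroup.induction_on q fun a => ?_
      have h1 : (QuotientGroup.mk a : X ⧸ N) = QuotientGroup.mk' N a := rfl
      rw [h1, ← map_pow, ← MonoidHom.mem_ker, QuotientGroup.ker_mk',
        Subgroup.mem_subgroupOf]
      have h2 : ((a ^ m : X) : G) = (a : G) ^ m := by simp
      rw [h2]
      exact mem_fsV_of_pow m a.2
    haveI hfin : Finite (X ⧸ N) := by
      letI cg : CommGroup (X ⧸ N) := { (inferInstance : Group (X ⧸ N)) with mul_comm := hcomm }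
      have hsoc : ∀ p : ℕ, p.Prime → {q : X ⧸ N | q ^ p = 1}.Finite := fun p hp =>
        (hFAR X (X ⧸ N) (QuotientGroup.mk' N) (QuotientGroup.mk'_surjective N)).2 p hp
      exact fsFinAb m hm (X ⧸ N) hexp hsoc
    have h1 : N.index ≠ 0 := by
      rw [Subgroup.index_eq_card]
      exact Nat.card_pos.ne'
    have h2 := Subgroup.relIndex_mul_index hle
    intro h0
    rw [← h2] at h0
    rcases Nat.mul_eq_zero.mp h0 with h3 | h3
    · exact h1 h3
    · exact ih h3

end FSAux

/-- Proposition 2.3: every solvable FAR-group belongs to `ℱ𝒮`. -/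
theorem solvable_FAR_mem_FS (G : Type u) [Group G] (hsol : IsSolvable G)
    (hFAR : IsFAR G) : InFS G := by
  haveI : Group.IsSolvable G := hsol
  intro n hn
  set m := n.factorial with hmdef
  have hm : m ≠ 0 := Nat.factorial_ne_zero n
  set W : Subgroup G := fsW m m with hW
  haveI hWnorm : W.Normal := fsW_normal m m
  have hWindex : W.index ≠ 0 := fsW_index_ne_zero hFAR m hm m
  haveI : Finite (G ⧸ W) := Nat.finite_of_card_ne_zero (by rwa [← Subgroup.index_eq_card])
  haveI : Finite (Subgroup (G ⧸ W)) :=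
    Finite.of_injective (fun K : Subgroup (G ⧸ W) => (K : Set (G ⧸ W))) SetLike.coe_injective
  have key : ∀ H : Subgroup G, H.index = n → W ≤ H := by
    intro H hH
    set N := H.normalCore with hNdef
    haveI : N.Normal := Subgroup.normalCore_normal H
    haveI hfinGH : Finite (G ⧸ H) :=
      Nat.finite_of_card_ne_zero (by rw [← Subgroup.index_eq_card, hH]; exact hn)
    have hNindex : N.index ∣ m := by
      rw [hNdef, Subgroup.normalCore_eq_ker, Subgroup.index_ker]
      have hdvd : Nat.card (MulAction.toPermHom G (G ⧸ H)).range ∣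
          Nat.card (Equiv.Perm (G ⧸ H)) := Subgroup.card_subgroup_dvd_card _
      have hcard : Nat.card (Equiv.Perm (G ⧸ H)) = m := by
        haveI : DecidableEq (G ⧸ H) := Classical.decEq _
        haveI : Fintype (G ⧸ H) := Fintype.ofFinite _
        rw [Nat.card_eq_fintype_card, Fintype.card_perm, ← Nat.card_eq_fintype_card,
          ← Subgroup.index_eq_card, hH]
      rwa [hcard] at hdvd
    have hNne : N.index ≠ 0 := fun h0 =>
      hm (Nat.eq_zero_of_zero_dvd (h0 ▸ hNindex))
    haveI : Finite (G ⧸ N) := Nat.finite_of_card_ne_zero (by rwa [← Subgroup.index_eq_card])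
    set π := QuotientGroup.mk' N with hπ
    have hQexp : ∀ x : G ⧸ N, x ^ m = 1 := by
      intro x
      refine orderOf_dvd_iff_pow_eq_one.mp (dvd_trans (orderOf_dvd_natCard x) ?_)
      rw [← Subgroup.index_eq_card]
      exact hNindex
    have hstep : ∀ X : Subgroup (G ⧸ N), fsV m X ≤ ⁅X, X⁆ := by
      intro X
      refine (Subgroup.closure_le _).2 ?_
      rintro g ⟨a, ha, b, hb, rfl | rfl⟩
      · exact Subgroup.commutator_mem_commutator ha hb
      · rw [SetLike.mem_coe, hQexp a]
        exact Subgroup.one_mem _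
    have hcard : ∀ k : ℕ, (fsW m k : Subgroup G).map π = ⊥ ∨
        Nat.card ((fsW m k : Subgroup G).map π) + k ≤ Nat.card (G ⧸ N) := by
      intro k
      induction k with
      | zero =>
        right
        have := Nat.le_of_dvd Nat.card_pos
          (Subgroup.card_subgroup_dvd_card ((fsW m 0 : Subgroup G).map π))
        omega
      | succ k ihk =>
        have hmap : ((fsW m (k + 1) : Subgroup G)).map π = fsV m ((fsW m k : Subgroup G).map π) :=
          map_fsV π m _
        by_cases hbot : (fsW m k : Subgroup G).map π = ⊥
        · left
          rw [hmap, hbot]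
          exact le_bot_iff.mp (fsV_le m ⊥)
        · rcases ihk with h | h
          · exact absurd h hbot
          · right
            set X : Subgroup (G ⧸ N) := (fsW m k : Subgroup G).map π with hXdef
            have hlt : fsV m X < X := by
              refine lt_of_le_of_lt (hstep X) (lt_of_le_of_ne (commutator_self_le X) ?_)
              intro heq
              exact hbot (eq_bot_of_le_commutator X (le_of_eq heq.symm))
            have hcardlt : Nat.card (fsV m X) < Nat.card X := by
              have hss : ((fsV m X : Subgroup (G ⧸ N)) : Set (G ⧸ N)) ⊂ (X : Set (G ⧸ N)) :=
                SetLike.coe_ssubset_coe.mpr hlt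
              have e1 : Nat.card (fsV m X) =
                  ((fsV m X : Subgroup (G ⧸ N)) : Set (G ⧸ N)).ncard :=
                Nat.card_coe_set_eq _
              have e2 : Nat.card X = ((X : Subgroup (G ⧸ N)) : Set (G ⧸ N)).ncard :=
                Nat.card_coe_set_eq _
              rw [e1, e2]
              exact Set.ncard_lt_ncard hss (Set.toFinite _)
            rw [hmap]
            omega
    have hbotc : ∀ j : ℕ, (fsW m (Nat.card (G ⧸ N) + j) : Subgroup G).map π = ⊥ := by
      have h0 : (fsW m (Nat.card (G ⧸ N)) : Subgroup G).map π = ⊥ := by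
        rcases hcard (Nat.card (G ⧸ N)) with h | h
        · exact h
        · exfalso
          have hpos : 0 < Nat.card ((fsW m (Nat.card (G ⧸ N)) : Subgroup G).map π) :=
            Nat.card_pos
          omega
      intro j
      induction j with
      | zero => exact h0
      | succ j ihj =>
        have hmap : ((fsW m (Nat.card (G ⧸ N) + (j + 1)) : Subgroup G)).map π =
            fsV m ((fsW m (Nat.card (G ⧸ N) + j) : Subgroup G).map π) := map_fsV π m _
        rw [hmap, ihj]
        exact le_bot_iff.mp (fsV_le m ⊥)
    have hcle : Nat.card (G ⧸ N) ≤ m := by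
      refine Nat.le_of_dvd (Nat.pos_of_ne_zero hm) ?_
      rw [← Subgroup.index_eq_card]
      exact hNindex
    have hWbot : (W : Subgroup G).map π = ⊥ := by
      have h1 : Nat.card (G ⧸ N) + (m - Nat.card (G ⧸ N)) = m := by omega
      have h2 := hbotc (m - Nat.card (G ⧸ N))
      rw [h1] at h2
      exact h2
    intro x hx
    have h1 : π x ∈ (W : Subgroup G).map π := Subgroup.mem_map_of_mem π hx
    rw [hWbot, Subgroup.mem_bot] at h1
    have h2 : x ∈ N := (QuotientGroup.eq_one_iff x).mp h1
    exact Subgroup.normalCore_le H h2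
  apply Set.finite_coe_iff.mp
  refine Finite.of_injective
    (fun H : {H : Subgroup G | H.index = n} => H.1.map (QuotientGroup.mk' W)) ?_
  intro H1 H2 heq
  apply Subtype.ext
  have h1 : W ≤ H1.1 := key H1.1 H1.2
  have h2 : W ≤ H2.1 := key H2.1 H2.2
  have h3 := congrArg (Subgroup.comap (QuotientGroup.mk' W)) heq
  rwa [Subgroup.comap_map_eq, Subgroup.comap_map_eq, QuotientGroup.ker_mk',
    sup_of_le_left h1, sup_of_le_left h2] at h3

end GoodProfinite
end

section
/- Let p be a prime, G a group, and S a section of G (a quotient of a subgroup of G). If the pro-p topology on G is homogeneous, then the pro-p topology on S is homogeneous. -/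
/-!
Common definitions for formalizing "Cohomology and profinite topologies for solvable
groups of finite rank" (K. Lorensen).

Group cohomology is defined via inhomogeneous cochains.  The continuous cohomology of the
pro-`p` (resp. profinite) completion of `G` with coefficients in a finite discrete module is
the direct limit, over the normal subgroups `N` of finite `p`-power (resp. finite) index
acting trivially on the module, of the cohomology of the quotients `G ⧸ N`; accordingly, the
statement that the completion map induces an isomorphism on cohomology is rendered as:
the canonical (inflation) maps from this directed system to `H^*(G, M)` are jointly
surjective, and any class of the system killed in `H^*(G, M)` is killed at a deeper level of
the system.
-/

open Function TensorProduct

universe u v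

namespace GoodProfinite

variable {G H : Type u} {M : Type v}

lemma pHomogeneous_of_surjective (p : ℕ) (hp : p.Prime) {G₁ G₂ : Type u} [Group G₁]
    [Group G₂] (φ : G₁ →* G₂) (hφ : Surjective φ) (h1 : PHomogeneous p G₁) :
    PHomogeneous p G₂ := by
  intro H' K' hK' hKi
  haveI := hK'
  set A := H'.comap φ
  have hres : Surjective (φ.subgroupComap H') := by
    rintro ⟨y, hy⟩
    obtain ⟨x, rfl⟩ := hφ y
    exact ⟨⟨x, hy⟩, rfl⟩
  set K₁ : Subgroup A := K'.comap (φ.subgroupComap H')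
  haveI : K₁.Normal := hK'.comap _
  obtain ⟨L, hLn, ⟨k', hLk⟩, hLA⟩ := h1 A K₁ inferInstance (by
    obtain ⟨k, hk⟩ := hKi
    exact ⟨k, by rw [Subgroup.index_comap_of_surjective _ hres, hk]⟩)
  haveI := hLn
  refine ⟨L.map φ, hLn.map φ hφ, ?_, ?_⟩
  · have hdvd : (L.map φ).index ∣ p ^ k' := hLk ▸ Subgroup.index_map_dvd L hφ
    obtain ⟨j, _, hj⟩ := (Nat.dvd_prime_pow hp).mp hdvd
    exact ⟨j, hj⟩
  · rintro ⟨x, hxH⟩ hx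
    obtain ⟨l, hl, hlx⟩ := hx
    have hlA : l ∈ A := by simp only [A, Subgroup.mem_comap, hlx]; exact hxH
    have : (⟨l, hlA⟩ : A) ∈ L.subgroupOf A := hl
    have hmem := hLA this
    have : φ.subgroupComap H' ⟨l, hlA⟩ ∈ K' := hmem
    convert this using 1
    exact Subtype.ext hlx.symm

lemma pHomogeneous_subgroup (p : ℕ) (hp : p.Prime) {G : Type u} [Group G] (H : Subgroup G)
    (hG : PHomogeneous p G) : PHomogeneous p ↥H := by
  intro A K hK hKi
  haveI := hK
  set e := A.equivMapOfInjective H.subtype H.subtype_injective with he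
  set K₂ : Subgroup (A.map H.subtype) := K.map e.toMonoidHom
  haveI : K₂.Normal := hK.map e.toMonoidHom e.surjective
  have hker : e.toMonoidHom.ker ≤ K := by
    intro x hx
    have hx1 : e x = 1 := hx
    have : x = 1 := e.injective (by simpa using hx1)
    rw [this]; exact K.one_mem
  obtain ⟨L, hLn, ⟨k', hLk⟩, hLB⟩ := hG (A.map H.subtype) K₂ inferInstance (by
    obtain ⟨k, hk⟩ := hKi
    exact ⟨k, by rw [Subgroup.index_map_eq K e.surjective hker, hk]⟩)
  haveI := hLn
  refine ⟨L.subgroupOf H, Subgroup.Normal.comap hLn _, ?_, ?_⟩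
  · have hdvd : (L.subgroupOf H).index ∣ p ^ k' := by
      rw [← hLk]
      exact Subgroup.relIndex_dvd_index_of_normal L H
    obtain ⟨j, _, hj⟩ := (Nat.dvd_prime_pow hp).mp hdvd
    exact ⟨j, hj⟩
  · intro x hx
    have hxL : ((x : ↥H) : G) ∈ L := hx
    have hex : e x ∈ L.subgroupOf (A.map H.subtype) := by
      show ((e x : ↥(A.map H.subtype)) : G) ∈ L
      rw [Subgroup.coe_equivMapOfInjective_apply]
      exact hxL
    obtain ⟨y, hy, hyx⟩ := hLB hex
    rwa [← e.injective hyx]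

/-- Lemma 3.3: any section of a `p`-homogeneous group is `p`-homogeneous. -/
theorem section_pHomogeneous (p : ℕ) (hp : p.Prime) (G : Type u) [Group G]
    (hG : PHomogeneous p G) (H : Subgroup G) (K : Subgroup H) (hK : K.Normal) :
    haveI := hK
    PHomogeneous p (↥H ⧸ K) := by
  haveI := hK
  exact pHomogeneous_of_surjective p hp (QuotientGroup.mk' K)
    (QuotientGroup.mk'_surjective K) (pHomogeneous_subgroup p hp H hG)

end GoodProfinite
end

section
/- Let p be a prime and let 1 → N → G → Q → 1 be a short exact sequence of groups such that N is topologically p-embedded in G and G belongs to the class ℱ𝒮. If the pro-p topologies on both N and Q are homogeneous, then the pro-p topology on G is homogeneous. -/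
/-!
Common definitions for formalizing "Cohomology and profinite topologies for solvable
groups of finite rank" (K. Lorensen).

Group cohomology is defined via inhomogeneous cochains.  The continuous cohomology of the
pro-`p` (resp. profinite) completion of `G` with coefficients in a finite discrete module is
the direct limit, over the normal subgroups `N` of finite `p`-power (resp. finite) index
acting trivially on the module, of the cohomology of the quotients `G ⧸ N`; accordingly, the
statement that the completion map induces an isomorphism on cohomology is rendered as:
the canonical (inflation) maps from this directed system to `H^*(G, M)` are jointly
surjective, and any class of the system killed in `H^*(G, M)` is killed at a deeper level of
the system.
-/

open Function TensorProduct

universe u v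

namespace GoodProfinite

variable {G H : Type u} {M : Type v}

lemma tpe_apply {p : ℕ} {G : Type u} [Group G] {H : Subgroup G} (h : TopPEmbedded p H)
    (Kg : Subgroup G)
    (hconj : ∀ x ∈ Kg, ∀ g ∈ H, g * x * g⁻¹ ∈ Kg)
    (hidx : ∃ k, Kg.relIndex H = p ^ k) :
    ∃ L : Subgroup G, L.Normal ∧ (∃ k, L.index = p ^ k) ∧ L ⊓ H ≤ Kg := by
  have hn : (Kg.subgroupOf H).Normal := by
    constructor
    intro n hn g
    show ((g * n * g⁻¹ : H) : G) ∈ Kg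
    simpa using hconj n.1 hn g.1 g.2
  obtain ⟨L, hLn, hLi, hLle⟩ := h (Kg.subgroupOf H) hn hidx
  refine ⟨L, hLn, hLi, ?_⟩
  rintro x ⟨hxL, hxH⟩
  exact hLle (show (⟨x, hxH⟩ : H) ∈ L.subgroupOf H from hxL)

lemma relIndex_dvd_aux {G : Type u} [Group G] {Kg H : Subgroup G} (S : Subgroup G)
    (hS : S ≤ H) (hn : (Kg.subgroupOf H).Normal) :
    Kg.relIndex S ∣ (Kg.subgroupOf H).index := by
  rw [← Subgroup.relIndex_subgroupOf hS]
  exact Subgroup.relIndex_dvd_index_of_normal _ _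

/-- Lemma 3.5: if `1 → N → G → Q → 1` is exact with `N ≤_{t(p)} G` and `G ∈ ℱ𝒮`, and
both `N` and `Q` are `p`-homogeneous, then so is `G`. -/
theorem pHomogeneous_extension (p : ℕ) (hp : p.Prime) (N G Q : Type u) [Group N]
    [Group G] [Group Q] (ι : N →* G) (π : G →* Q) (hι : Injective ι) (hπ : Surjective π)
    (hex : ι.range = π.ker) (htop : TopPEmbedded p ι.range) (hFS : InFS G)
    (hN : PHomogeneous p N) (hQ : PHomogeneous p Q) : PHomogeneous p G := by
  intro H K hKn hKi
  obtain ⟨k, hk⟩ := hKi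
  -- transfer K to a subgroup of G
  set Kg : Subgroup G := K.map H.subtype with hKg
  have hKgH : Kg ≤ H := by
    rintro x ⟨y, _, rfl⟩; exact y.2
  have hKgOf : Kg.subgroupOf H = K :=
    Subgroup.comap_map_eq_self_of_injective H.subtype_injective K
  have hKgconj : ∀ x ∈ Kg, ∀ g ∈ H, g * x * g⁻¹ ∈ Kg := by
    intro x hx g hg
    have hxx : (⟨x, hKgH hx⟩ : H) ∈ K := by rw [← hKgOf]; exact hx
    have := hKn.conj_mem _ hxx ⟨g, hg⟩
    exact ⟨_, this, rfl⟩
  have hKgidx : (Kg.subgroupOf H).index = p ^ k := by rw [hKgOf]; exact hk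
  have hKgnormal : (Kg.subgroupOf H).Normal := by rw [hKgOf]; exact hKn
  -- Step 1 : use p-homogeneity of N to find L_N
  obtain ⟨LN, hLNn, ⟨a, hLNa⟩, hLNle⟩ := tpe_apply (hN (H.comap ι)) (Kg.comap ι)
    (by
      intro x hx g hg
      show ι (g * x * g⁻¹) ∈ Kg
      rw [map_mul, map_mul, map_inv]
      exact hKgconj _ hx _ hg)
    (by
      have h1 : (Kg.comap ι).relIndex (H.comap ι) = Kg.relIndex (ι.range ⊓ H) := by
        rw [Subgroup.relIndex_comap, Subgroup.map_comap_eq]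
      have h2 : Kg.relIndex (ι.range ⊓ H) ∣ p ^ k := by
        rw [← hKgidx]
        exact relIndex_dvd_aux _ inf_le_right hKgnormal
      rw [h1]
      obtain ⟨j, _, hj⟩ := (Nat.dvd_prime_pow hp).mp h2
      exact ⟨j, hj⟩)
  -- use that ι.range is topologically p-embedded to find M
  obtain ⟨M, hMn, ⟨c, hMc⟩, hMle⟩ := tpe_apply htop (LN.map ι)
    (by
      rintro x ⟨n, hn, rfl⟩ g ⟨m, rfl⟩
      exact ⟨m * n * m⁻¹, hLNn.conj_mem n hn m, by rw [map_mul, map_mul, map_inv]⟩)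
    (by
      refine ⟨a, ?_⟩
      have e1 : ((LN.map ι).subgroupOf ι.range).comap ι.rangeRestrict = LN := by
        rw [Subgroup.subgroupOf, Subgroup.comap_comap, MonoidHom.subtype_comp_rangeRestrict,
          Subgroup.comap_map_eq_self_of_injective hι]
      calc (LN.map ι).relIndex ι.range
          = (((LN.map ι).subgroupOf ι.range).comap ι.rangeRestrict).index :=
            (Subgroup.index_comap_of_surjective _ (MonoidHom.rangeRestrict_surjective ι)).symm
        _ = p ^ a := by rw [e1, hLNa])
  -- key containment coming from step 1
  have key1 : M ⊓ H ⊓ ι.range ≤ Kg := by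
    rintro x ⟨⟨hxM, hxH⟩, hxR⟩
    obtain ⟨n, hn, rfl⟩ := hMle ⟨hxM, hxR⟩
    exact hLNle ⟨hn, hxH⟩
  -- Step 2 : use p-homogeneity of Q
  set H1 : Subgroup G := M ⊓ H with hH1
  set K1 : Subgroup G := Kg ⊓ M with hK1
  have hK1H1 : K1 ≤ H1 := fun x hx => ⟨hx.2, hKgH hx.1⟩
  obtain ⟨LQ, hLQn, ⟨b, hLQb⟩, hLQle⟩ := tpe_apply (hQ (H1.map π)) (K1.map π)
    (by
      rintro x ⟨y, hy, rfl⟩ g ⟨h, hh, rfl⟩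
      refine ⟨h * y * h⁻¹, ⟨hKgconj _ hy.1 _ hh.2, M.mul_mem (M.mul_mem hh.1 hy.2) (M.inv_mem hh.1)⟩, ?_⟩
      rw [map_mul, map_mul, map_inv])
    (by
      have h1 : (K1 ⊔ π.ker).relIndex H1 = (K1.map π).relIndex (H1.map π) := by
        rw [← Subgroup.comap_map_eq, Subgroup.relIndex_comap]
      have h2 : (K1 ⊔ π.ker).relIndex H1 ∣ K1.relIndex H1 :=
        Subgroup.relIndex_dvd_of_le_left H1 le_sup_left
      have h3 : K1 = Kg ⊓ H1 := by
        rw [hK1, hH1]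
        exact le_antisymm (fun x hx => ⟨hx.1, hx.2, hKgH hx.1⟩)
          (fun x hx => ⟨hx.1, hx.2.1⟩)
      have h4 : K1.relIndex H1 ∣ p ^ k := by
        rw [h3, Subgroup.inf_relIndex_right, ← hKgidx]
        exact relIndex_dvd_aux _ inf_le_right hKgnormal
      obtain ⟨j, _, hj⟩ := (Nat.dvd_prime_pow hp).mp (h2.trans h4)
      exact ⟨j, by rw [← h1, hj]⟩)
  set L1 : Subgroup G := LQ.comap π with hL1
  have hL1n : L1.Normal := hLQn.comap π
  have hL1i : L1.index = p ^ b := by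
    rw [hL1, Subgroup.index_comap_of_surjective LQ hπ, hLQb]
  refine ⟨M ⊓ L1, ?_, ?_, ?_⟩
  · exact ⟨fun x hx g => ⟨hMn.conj_mem x hx.1 g, hL1n.conj_mem x hx.2 g⟩⟩
  · haveI := hMn
    have h1 : (M ⊓ L1).relIndex L1 * L1.index = (M ⊓ L1).index :=
      Subgroup.relIndex_mul_index inf_le_right
    rw [Subgroup.inf_relIndex_right] at h1
    have h2 : (M ⊓ L1).index ∣ p ^ (c + b) := by
      rw [← h1, pow_add, ← hMc, ← hL1i]
      exact mul_dvd_mul (Subgroup.relIndex_dvd_index_of_normal M L1) dvd_rfl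
    obtain ⟨j, _, hj⟩ := (Nat.dvd_prime_pow hp).mp h2
    exact ⟨j, hj⟩
  · intro x hx
    obtain ⟨hxM, hxL1⟩ := hx
    have hxH : (x : G) ∈ H := x.2
    have hπx : π x ∈ LQ ⊓ H1.map π := ⟨hxL1, ⟨x, ⟨hxM, hxH⟩, rfl⟩⟩
    obtain ⟨y, hyK1, hy⟩ := hLQle hπx
    have hker : (y⁻¹ * x : G) ∈ ι.range := by
      rw [hex, MonoidHom.mem_ker, map_mul, map_inv, hy, inv_mul_cancel]
    have hmem : (y⁻¹ * x : G) ∈ Kg :=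
      key1 ⟨⟨M.mul_mem (M.inv_mem hyK1.2) hxM, H.mul_mem (H.inv_mem (hKgH hyK1.1)) hxH⟩, hker⟩
    have hxKg : (x : G) ∈ Kg := by
      have := Kg.mul_mem hyK1.1 hmem
      rwa [← mul_assoc, mul_inv_cancel, one_mul] at this
    rw [← hKgOf]
    exact hxKg
end GoodProfinite
end
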